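/- Let X be a compact uniform space, f_{0,∞} a sequence of continuous self-maps of X, and μ a Borel probability measure on X that is f_{0,∞}-homogeneous. Then h(f_{0,∞}) = k(f_{0,∞}, μ) := lim_{γ∈𝒰^{s,o}} limsup_{n→∞} −(1/n) log μ(D_n(f_{0,∞}, y, γ)), independently of y. -/

import Mathlib

open Filter Set
open scoped Uniformity Topology ENNReal NNReal

/-- `itr f i n = f (i+n-1) ∘ ⋯ ∘ f i`, the composition of `n` maps of the sequence `f`
starting at index `i` (so `itr f i 0 = id`). -/
def itr {X : Type*} (f : ℕ → X → X) (i : ℕ) : ℕ → X → X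
  | 0 => id
  | n + 1 => fun x => f (i + n) (itr f i n x)

/-- `E` is an `(n,γ)`-separated set for the nonautonomous system `f`. -/
def IsSep {X : Type*} (f : ℕ → X → X) (n : ℕ) (γ : Set (X × X)) (E : Set X) : Prop :=
  ∀ x ∈ E, ∀ y ∈ E, x ≠ y → ∃ j < n, (itr f 0 j x, itr f 0 j y) ∉ γ

/-- `F` `(n,γ)`-spans the set `K` for the nonautonomous system `f`. -/
def Spans {X : Type*} (f : ℕ → X → X) (n : ℕ) (γ : Set (X × X)) (F K : Set X) : Prop :=
  ∀ x ∈ K, ∃ y ∈ F, ∀ j < n, (itr f 0 j x, itr f 0 j y) ∈ γ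

/-- Maximal cardinality of an `(n,γ)`-separated subset of `Λ`. -/
noncomputable def sepCard {X : Type*} (f : ℕ → X → X) (Λ : Set X) (n : ℕ)
    (γ : Set (X × X)) : ℕ :=
  sSup {m | ∃ E : Finset X, ↑E ⊆ Λ ∧ IsSep f n γ ↑E ∧ E.card = m}

/-- Minimal cardinality of a subset of `Λ` that `(n,γ)`-spans `Λ`. -/
noncomputable def spanCard {X : Type*} (f : ℕ → X → X) (Λ : Set X) (n : ℕ)
    (γ : Set (X × X)) : ℕ :=
  sInf {m | ∃ F : Finset X, ↑F ⊆ Λ ∧ Spans f n γ ↑F Λ ∧ F.card = m}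


/-- Topological entropy of the nonautonomous system `f` on the set `Λ`, defined via
separated sets; by antitonicity in the entourage, the supremum over all entourages agrees
with the limit along the net of symmetric open entourages used in the paper. -/
noncomputable def entropy {X : Type*} [UniformSpace X] (f : ℕ → X → X) (Λ : Set X) : EReal :=
  ⨆ γ ∈ 𝓤 X, atTop.limsup fun n : ℕ =>
    ((Real.log (sepCard f Λ n γ) / n : ℝ) : EReal)

/-- The dynamical `γ`-ball of order `n` at `x`:
`D_n(f, x, γ) = ⋂_{k<n} (f_0^k)⁻¹(γ[f_0^k(x)])`. -/
def dynBall {X : Type*} (f : ℕ → X → X) (x : X) (n : ℕ) (γ : Set (X × X)) : Set X :=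
  {y | ∀ k < n, (itr f 0 k x, itr f 0 k y) ∈ γ}

section Aux

variable {X : Type*}

lemma itr_continuous [TopologicalSpace X] (f : ℕ → X → X) (hf : ∀ n, Continuous (f n))
    (i n : ℕ) : Continuous (itr f i n) := by
  induction n with
  | zero => exact continuous_id
  | succ n ih => exact (hf (i + n)).comp ih

lemma mem_dynBall_self [UniformSpace X] (f : ℕ → X → X) (x : X) (n : ℕ) {γ : Set (X × X)}
    (hγ : γ ∈ 𝓤 X) : x ∈ dynBall f x n γ :=
  fun _ _ => refl_mem_uniformity hγ

lemma dynBall_mono (f : ℕ → X → X) (x : X) (n : ℕ) {γ η : Set (X × X)} (h : γ ⊆ η) :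
    dynBall f x n γ ⊆ dynBall f x n η :=
  fun _ hy k hk => h (hy k hk)

lemma isOpen_dynBall [UniformSpace X] (f : ℕ → X → X) (hf : ∀ n, Continuous (f n))
    (x : X) (n : ℕ) {γ : Set (X × X)} (hγ : IsOpen γ) : IsOpen (dynBall f x n γ) := by
  have h : dynBall f x n γ =
      ⋂ k ∈ Finset.range n, (fun y => (itr f 0 k x, itr f 0 k y)) ⁻¹' γ := by
    ext y
    simp [dynBall, Finset.mem_range]
  rw [h]
  exact isOpen_biInter_finset fun k _ =>
    hγ.preimage (continuous_const.prodMk (itr_continuous f hf 0 k))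

lemma sep_bdd [UniformSpace X] [CompactSpace X] (f : ℕ → X → X)
    (hf : ∀ n, Continuous (f n)) {γ : Set (X × X)} (hγ : γ ∈ 𝓤 X) (n : ℕ) :
    ∃ N, ∀ E : Finset X, IsSep f n γ ↑E → E.card ≤ N := by
  obtain ⟨η, hη, hηs, hηc⟩ := comp_symm_mem_uniformity_sets hγ
  obtain ⟨t, ⟨htm, hto, hts⟩, htη⟩ := uniformity_hasBasis_open_symmetric.mem_iff.mp hη
  obtain ⟨s, hs⟩ := isCompact_univ.elim_finite_subcover (fun x : X => dynBall f x n t)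
    (fun x => isOpen_dynBall f hf x n hto)
    (fun x _ => Set.mem_iUnion.2 ⟨x, mem_dynBall_self f x n htm⟩)
  refine ⟨s.card, fun E hE => ?_⟩
  have hcov : ∀ e : X, ∃ z, z ∈ s ∧ e ∈ dynBall f z n t := by
    intro e
    have := hs (Set.mem_univ e)
    simpa using this
  choose g hgs hgb using hcov
  refine Finset.card_le_card_of_injOn g (fun e _ => hgs e) ?_
  intro e he e' he' hge
  by_contra hne
  obtain ⟨j, hj, hjγ⟩ := hE e he e' he' hne
  apply hjγ
  have h1 : (itr f 0 j (g e), itr f 0 j e) ∈ t := hgb e j hj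
  have h2 : (itr f 0 j (g e), itr f 0 j e') ∈ t := by rw [hge]; exact hgb e' j hj
  have hmem : (itr f 0 j e, itr f 0 j e') ∈ SetRel.comp t t :=
    ⟨itr f 0 j (g e), Std.Symm.symm (self := hts) _ _ h1, h2⟩
  exact hηc (SetRel.comp_subset_comp htη htη hmem)

lemma sepSet_bddAbove [UniformSpace X] [CompactSpace X] (f : ℕ → X → X)
    (hf : ∀ n, Continuous (f n)) {γ : Set (X × X)} (hγ : γ ∈ 𝓤 X) (n : ℕ) :
    BddAbove {m | ∃ E : Finset X, ↑E ⊆ (Set.univ : Set X) ∧ IsSep f n γ ↑E ∧ E.card = m} := by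
  obtain ⟨N, hN⟩ := sep_bdd f hf hγ n
  exact ⟨N, fun m hm => by obtain ⟨E, _, hE, rfl⟩ := hm; exact hN E hE⟩

lemma exists_sep_finset [UniformSpace X] [CompactSpace X] (f : ℕ → X → X)
    (hf : ∀ n, Continuous (f n)) {γ : Set (X × X)} (hγ : γ ∈ 𝓤 X) (n : ℕ) :
    ∃ E : Finset X, IsSep f n γ ↑E ∧ E.card = sepCard f Set.univ n γ := by
  have hne : {m | ∃ E : Finset X, ↑E ⊆ (Set.univ : Set X) ∧ IsSep f n γ ↑E ∧ E.card = m}.Nonempty :=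
    ⟨0, ∅, by simp, fun x hx => by simp at hx, by simp⟩
  obtain ⟨E, _, hE, hcard⟩ := Nat.sSup_mem hne (sepSet_bddAbove f hf hγ n)
  exact ⟨E, hE, hcard⟩

lemma one_le_sepCard [UniformSpace X] [CompactSpace X] (f : ℕ → X → X)
    (hf : ∀ n, Continuous (f n)) {γ : Set (X × X)} (hγ : γ ∈ 𝓤 X) (n : ℕ) (x₀ : X) :
    1 ≤ sepCard f Set.univ n γ := by
  apply le_csSup (sepSet_bddAbove f hf hγ n)
  refine ⟨{x₀}, by simp, ?_, by simp⟩
  intro a ha b hb hab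
  exfalso
  apply hab
  simp only [Finset.coe_singleton, Set.mem_singleton_iff] at ha hb
  rw [ha, hb]

lemma sep_cover [UniformSpace X] [CompactSpace X] (f : ℕ → X → X)
    (hf : ∀ n, Continuous (f n)) {γ : Set (X × X)} (hγ : γ ∈ 𝓤 X)
    (hsy : SetRel.IsSymm γ) (n : ℕ) :
    ∃ E : Finset X, IsSep f n γ ↑E ∧ E.card = sepCard f Set.univ n γ ∧
      ∀ x : X, ∃ z ∈ E, x ∈ dynBall f z n γ := by
  classical
  obtain ⟨E, hE, hcard⟩ := exists_sep_finset f hf hγ n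
  refine ⟨E, hE, hcard, fun x => ?_⟩
  by_contra hx
  push_neg at hx
  have hxE : x ∉ E := fun h => hx x h (mem_dynBall_self f x n hγ)
  have hsep : IsSep f n γ ↑(insert x E) := by
    intro a ha b hb hab
    simp only [Finset.coe_insert, Set.mem_insert_iff, Finset.mem_coe] at ha hb
    rcases ha with rfl | ha
    · rcases hb with rfl | hb
      · exact absurd rfl hab
      · have h1 := hx b hb
        simp only [dynBall, Set.mem_setOf_eq] at h1
        push_neg at h1
        obtain ⟨k, hk, hkm⟩ := h1
        exact ⟨k, hk, fun hmem => hkm (Std.Symm.symm (self := hsy) _ _ hmem)⟩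
    · rcases hb with rfl | hb
      · have h1 := hx a ha
        simp only [dynBall, Set.mem_setOf_eq] at h1
        push_neg at h1
        obtain ⟨k, hk, hkm⟩ := h1
        exact ⟨k, hk, hkm⟩
      · exact hE a ha b hb hab
  have hle : E.card + 1 ≤ sepCard f Set.univ n γ := by
    apply le_csSup (sepSet_bddAbove f hf hγ n)
    exact ⟨insert x E, by simp, hsep, by rw [Finset.card_insert_of_notMem hxE]⟩
  omega

lemma limsup_div_nat_le {a b : ℕ → ℝ} {C : ℝ} (h : ∀ᶠ n in atTop, a n ≤ C + b n) :
    atTop.limsup (fun n : ℕ => ((a n / n : ℝ) : EReal)) ≤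
      atTop.limsup (fun n : ℕ => ((b n / n : ℝ) : EReal)) := by
  set u : ℕ → EReal := fun n : ℕ => ((C / n : ℝ) : EReal) with hu
  set v : ℕ → EReal := fun n : ℕ => ((b n / n : ℝ) : EReal) with hv
  have h0 : Tendsto u atTop (𝓝 (0 : EReal)) := by
    rw [show ((0 : EReal)) = ((0 : ℝ) : EReal) by norm_num]
    exact EReal.tendsto_coe.mpr (tendsto_const_div_atTop_nhds_zero_nat C)
  have hu0 : atTop.limsup u = 0 := h0.limsup_eq
  have h1 : atTop.limsup (fun n : ℕ => ((a n / n : ℝ) : EReal)) ≤ atTop.limsup (u + v) := by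
    refine limsup_le_limsup ?_ (by isBoundedDefault) (by isBoundedDefault)
    filter_upwards [h, eventually_gt_atTop 0] with n hn hn0
    have hnp : (0 : ℝ) < n := by exact_mod_cast hn0
    simp only [Pi.add_apply, hu, hv, ← EReal.coe_add, EReal.coe_le_coe_iff, ← add_div]
    have := mul_le_mul_of_nonneg_right hn (by positivity : (0:ℝ) ≤ ((n:ℝ))⁻¹)
    simpa [div_eq_mul_inv] using this
  refine h1.trans ?_
  have h2 := EReal.limsup_add_le (u := u) (v := v) (f := atTop)
    (Or.inl (by rw [hu0]; simp)) (Or.inl (by rw [hu0]; simp))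
  rw [hu0, zero_add] at h2
  exact h2

end Aux

open MeasureTheory in
/-- If `μ` is an `f_{0,∞}`-homogeneous Borel probability measure, then the entropy of the
system equals `k(f_{0,∞}, μ) = lim_γ limsup_n −(1/n) log μ(D_n(f, y, γ))`, for every
choice of base point `y`. -/
theorem entropy_eq_homogeneous_measure {X : Type*} [UniformSpace X] [CompactSpace X]
    [MeasurableSpace X] [BorelSpace X]
    (f : ℕ → X → X) (hf : ∀ n, Continuous (f n))
    (μ : Measure X) [IsProbabilityMeasure μ]
    (hfin : ∀ K : Set X, IsCompact K → μ K < ⊤)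
    (hpos : ∃ K : Set X, IsCompact K ∧ 0 < μ K)
    (hhom : ∀ γ ∈ 𝓤 X, ∃ η ∈ 𝓤 X, ∃ c : NNReal, 0 < c ∧
      ∀ x y : X, ∀ n : ℕ, 1 ≤ n →
        μ (dynBall f y n η) ≤ (c : ENNReal) * μ (dynBall f x n γ)) :
    ∀ y : X, entropy f Set.univ =
      ⨆ γ ∈ 𝓤 X, atTop.limsup fun n : ℕ =>
        ((-(Real.log (μ (dynBall f y n γ)).toReal) / n : ℝ) : EReal) := by
  intro y
  have hX : Nonempty X := by
    obtain ⟨K, _, hK⟩ := hpos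
    rcases Set.eq_empty_or_nonempty K with rfl | hne
    · simp at hK
    · exact ⟨hne.choose⟩
  obtain ⟨x₀⟩ := hX
  have key2 : ∀ γ ∈ 𝓤 X, ∃ γ₀ ∈ 𝓤 X, ∃ c : NNReal, 0 < c ∧ ∀ (z : X) (n : ℕ), 1 ≤ n →
      (1 : ℝ≥0∞) ≤ (sepCard f Set.univ n γ₀ : ℝ≥0∞) * ((c : ℝ≥0∞) * μ (dynBall f z n γ)) := by
    intro γ hγ
    obtain ⟨η, hη, c, hc, hcb⟩ := hhom γ hγ
    obtain ⟨γ₀, ⟨h₀m, h₀o, h₀s⟩, h₀η⟩ := uniformity_hasBasis_open_symmetric.mem_iff.mp hη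
    refine ⟨γ₀, h₀m, c, hc, fun z n hn => ?_⟩
    obtain ⟨E, hE, hcard, hcov⟩ := sep_cover f hf h₀m h₀s n
    calc (1 : ℝ≥0∞) = μ Set.univ := measure_univ.symm
      _ ≤ μ (⋃ e ∈ E, dynBall f e n γ₀) := measure_mono (fun x _ => by
          obtain ⟨e, he, hx⟩ := hcov x
          exact Set.mem_biUnion he hx)
      _ ≤ ∑ e ∈ E, μ (dynBall f e n γ₀) := measure_biUnion_finset_le E _
      _ ≤ ∑ e ∈ E, ((c : ℝ≥0∞) * μ (dynBall f z n γ)) :=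
          Finset.sum_le_sum fun e _ =>
            (measure_mono (dynBall_mono f e n h₀η)).trans (hcb z e n hn)
      _ = (sepCard f Set.univ n γ₀ : ℝ≥0∞) * ((c : ℝ≥0∞) * μ (dynBall f z n γ)) := by
          rw [Finset.sum_const, ← hcard, nsmul_eq_mul]
  have hball_pos : ∀ γ ∈ 𝓤 X, ∀ (z : X) (n : ℕ), 1 ≤ n → 0 < μ (dynBall f z n γ) := by
    intro γ hγ z n hn
    obtain ⟨γ₀, h₀, c, hc, hkey⟩ := key2 γ hγ
    rcases eq_zero_or_pos (μ (dynBall f z n γ)) with h0 | h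
    · exfalso
      have h1 := hkey z n hn
      rw [h0, mul_zero, mul_zero] at h1
      simp at h1
    · exact h
  have hlog : ∀ (γ : Set (X × X)), γ ∈ 𝓤 X → ∀ (z : X) (n : ℕ), 1 ≤ n →
      0 < (μ (dynBall f z n γ)).toReal := fun γ hγ z n hn =>
    ENNReal.toReal_pos (hball_pos γ hγ z n hn).ne' (measure_ne_top μ _)
  apply le_antisymm
  · unfold entropy
    refine iSup₂_le fun γ hγ => ?_
    obtain ⟨η, hη, hηs, hηc⟩ := comp_symm_mem_uniformity_sets hγ
    obtain ⟨t, ⟨htm, hto, hts⟩, htη⟩ := uniformity_hasBasis_open_symmetric.mem_iff.mp hη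
    have htc : SetRel.comp t t ⊆ γ := (SetRel.comp_subset_comp htη htη).trans hηc
    obtain ⟨η', hη', c, hc, hcb⟩ := hhom t htm
    have key1 : ∀ n : ℕ, 1 ≤ n →
        (sepCard f Set.univ n γ : ℝ≥0∞) * μ (dynBall f y n η') ≤ (c : ℝ≥0∞) := by
      intro n hn
      obtain ⟨E, hE, hcard⟩ := exists_sep_finset f hf hγ n
      have hdisj : (↑E : Set X).PairwiseDisjoint fun e => dynBall f e n t := by
        intro e he e' he' hne
        refine Set.disjoint_left.mpr fun w hw hw' => ?_
        obtain ⟨j, hj, hjγ⟩ := hE e he e' he' hne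
        exact hjγ (htc ⟨itr f 0 j w, hw j hj, Std.Symm.symm (self := hts) _ _ (hw' j hj)⟩)
      have hmeas : ∀ e ∈ E, MeasurableSet (dynBall f e n t) := fun e _ =>
        (isOpen_dynBall f hf e n hto).measurableSet
      calc (sepCard f Set.univ n γ : ℝ≥0∞) * μ (dynBall f y n η')
          = ∑ _e ∈ E, μ (dynBall f y n η') := by
            rw [Finset.sum_const, ← hcard, nsmul_eq_mul]
        _ ≤ ∑ e ∈ E, (c : ℝ≥0∞) * μ (dynBall f e n t) :=
            Finset.sum_le_sum fun e _ => hcb e y n hn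
        _ = (c : ℝ≥0∞) * ∑ e ∈ E, μ (dynBall f e n t) := by rw [Finset.mul_sum]
        _ = (c : ℝ≥0∞) * μ (⋃ e ∈ E, dynBall f e n t) := by
            rw [measure_biUnion_finset hdisj hmeas]
        _ ≤ (c : ℝ≥0∞) * 1 := by
            gcongr
            exact prob_le_one
        _ = c := mul_one _
    have hreal : ∀ᶠ n in atTop, Real.log (sepCard f Set.univ n γ) ≤
        Real.log c + -(Real.log (μ (dynBall f y n η')).toReal) := by
      rw [eventually_atTop]
      refine ⟨1, fun n hn => ?_⟩
      have hq := hlog η' hη' y n hn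
      have hm : (1 : ℝ) ≤ (sepCard f Set.univ n γ : ℝ) := by
        exact_mod_cast one_le_sepCard f hf hγ n x₀
      have h1 : (sepCard f Set.univ n γ : ℝ) * (μ (dynBall f y n η')).toReal ≤ (c : ℝ) := by
        have h2 := ENNReal.toReal_mono ENNReal.coe_ne_top (key1 n hn)
        rwa [ENNReal.toReal_mul, ENNReal.coe_toReal, ENNReal.toReal_natCast] at h2
      have h2 : Real.log ((sepCard f Set.univ n γ : ℝ) * (μ (dynBall f y n η')).toReal)
          ≤ Real.log c := Real.log_le_log (by positivity) h1
      rw [Real.log_mul (by positivity) hq.ne'] at h2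
      linarith
    refine le_trans (limsup_div_nat_le hreal) ?_
    exact le_iSup₂_of_le η' hη' le_rfl
  · refine iSup₂_le fun γ hγ => ?_
    obtain ⟨γ₀, h₀, c, hc, hkey⟩ := key2 γ hγ
    have hreal : ∀ᶠ n in atTop, -(Real.log (μ (dynBall f y n γ)).toReal) ≤
        Real.log c + Real.log (sepCard f Set.univ n γ₀) := by
      rw [eventually_atTop]
      refine ⟨1, fun n hn => ?_⟩
      have hp := hlog γ hγ y n hn
      have hm : (1 : ℝ) ≤ (sepCard f Set.univ n γ₀ : ℝ) := by
        exact_mod_cast one_le_sepCard f hf h₀ n x₀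
      have h1 : (1 : ℝ) ≤ (sepCard f Set.univ n γ₀ : ℝ) *
          ((c : ℝ) * (μ (dynBall f y n γ)).toReal) := by
        have hne : (sepCard f Set.univ n γ₀ : ℝ≥0∞) *
            ((c : ℝ≥0∞) * μ (dynBall f y n γ)) ≠ ⊤ :=
          ENNReal.mul_ne_top (ENNReal.natCast_ne_top _)
            (ENNReal.mul_ne_top ENNReal.coe_ne_top (measure_ne_top μ _))
        have h2 := ENNReal.toReal_mono hne (hkey y n hn)
        rwa [ENNReal.toReal_one, ENNReal.toReal_mul, ENNReal.toReal_mul,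
          ENNReal.coe_toReal, ENNReal.toReal_natCast] at h2
      have h2 : (0 : ℝ) ≤ Real.log ((sepCard f Set.univ n γ₀ : ℝ) *
          ((c : ℝ) * (μ (dynBall f y n γ)).toReal)) := by
        rw [← Real.log_one]
        exact Real.log_le_log one_pos h1
      rw [Real.log_mul (by positivity) (by positivity), Real.log_mul (by positivity) hp.ne'] at h2
      linarith
    refine le_trans (limsup_div_nat_le hreal) ?_
    unfold entropy
    exact le_iSup₂_of_le γ₀ h₀ le_rfl
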